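/- Let q ≥ 3 be a prime and let S ⊆ F_q be any subset with |S| = (q−1)/2. Then the chromatic number of the graph G_S equals q. -/

import Mathlib

/-- The graph `G_S` on vertex set `F_q²`: `u = (u₁,u₂)` and `v = (v₁,v₂)` are adjacent
iff `u₁ ≠ v₁` and `(v₂ - u₂)(v₁ - u₁)⁻¹ ∈ S`. -/
def GS (q : ℕ) [Fact (Nat.Prime q)] (S : Finset (ZMod q)) :
    SimpleGraph (ZMod q × ZMod q) where
  Adj u v := u.1 ≠ v.1 ∧ (v.2 - u.2) * (v.1 - u.1)⁻¹ ∈ S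
  symm := by
    constructor
    rintro u v ⟨h1, h2⟩
    refine ⟨h1.symm, ?_⟩
    have h : (u.2 - v.2) * (u.1 - v.1)⁻¹ = (v.2 - u.2) * (v.1 - u.1)⁻¹ := by
      rw [show u.2 - v.2 = -(v.2 - u.2) by ring, show u.1 - v.1 = -(v.1 - u.1) by ring,
        inv_neg, neg_mul_neg]
    rwa [h]
  loopless := by
    constructor
    rintro u ⟨h1, _⟩
    exact h1 rfl

/-- The chromatic number (as a natural number). -/
noncomputable def chromNum {V : Type*} (G : SimpleGraph V) : ℕ :=
  sInf {n : ℕ | G.Colorable n}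

lemma slope_eq (q : ℕ) [Fact (Nat.Prime q)] (u v : ZMod q × ZMod q)
    (h1 : u.1 ≠ v.1) (c : ZMod q) (h : v.2 - c * v.1 = u.2 - c * u.1) :
    (v.2 - u.2) * (v.1 - u.1)⁻¹ = c := by
  have hne : v.1 - u.1 ≠ 0 := sub_ne_zero.mpr (Ne.symm h1)
  have h2 : v.2 - u.2 = c * (v.1 - u.1) := by linear_combination h
  field_simp [h2]
  linear_combination h2

/-- For a prime `q ≥ 3` and any `S ⊆ F_q` with `|S| = (q-1)/2`, the chromatic number
of `G_S` equals `q`. -/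
theorem stmt9 (q : ℕ) [Fact (Nat.Prime q)] (hq : 3 ≤ q)
    (S : Finset (ZMod q)) (hS : S.card = (q - 1) / 2) :
    chromNum (GS q S) = q := by
  have hcard : Fintype.card (ZMod q) = q := ZMod.card q
  -- Upper bound: there is a proper q-coloring
  have hub : (GS q S).Colorable q := by
    have hlt : S.card < Fintype.card (ZMod q) := by rw [hcard, hS]; omega
    have hcompl : (Sᶜ : Finset (ZMod q)).Nonempty := by
      rw [← Finset.card_pos, Finset.card_compl]
      omega
    obtain ⟨c, hc'⟩ := hcompl
    have hc : c ∉ S := Finset.mem_compl.mp hc'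
    have coloring : (GS q S).Coloring (ZMod q) := by
      refine SimpleGraph.Coloring.mk (fun v => v.2 - c * v.1) ?_
      intro u v hadj heq
      obtain ⟨h1, h2⟩ := hadj
      have := slope_eq q u v h1 c heq.symm
      rw [this] at h2
      exact hc h2
    have := coloring.colorable
    rwa [hcard] at this
  -- Lower bound: every n-coloring needs n ≥ q
  have hlb : ∀ n, (GS q S).Colorable n → q ≤ n := by
    rintro n ⟨C⟩
    have hSne : S.Nonempty := Finset.card_pos.mp (by rw [hS]; omega)
    obtain ⟨s, hs⟩ := hSne
    have hfib : ∀ i : Fin n,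
        (Finset.univ.filter (fun v : ZMod q × ZMod q => C v = i)).card ≤ q := by
      intro i
      have hinj : Set.InjOn (fun v : ZMod q × ZMod q => v.2 - s * v.1)
          ↑(Finset.univ.filter (fun v => C v = i)) := by
        intro u hu v hv hguv
        simp only [Finset.coe_filter, Set.mem_setOf_eq] at hu hv
        by_contra hne
        have h1 : u.1 ≠ v.1 := by
          intro h
          apply hne
          have h2 : u.2 - s * v.1 = v.2 - s * v.1 := by
            have := hguv; simp only at this; rw [h] at this; exact this
          exact Prod.ext h (sub_left_inj.mp h2)
        have hadj : (GS q S).Adj u v := by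
          refine ⟨h1, ?_⟩
          have := slope_eq q u v h1 s (by simpa using hguv.symm)
          rw [this]; exact hs
        exact C.valid hadj (hu.2.trans hv.2.symm)
      calc (Finset.univ.filter (fun v : ZMod q × ZMod q => C v = i)).card
          = ((Finset.univ.filter (fun v : ZMod q × ZMod q => C v = i)).image
              (fun v => v.2 - s * v.1)).card := (Finset.card_image_of_injOn hinj).symm
        _ ≤ Fintype.card (ZMod q) := Finset.card_le_univ _
        _ = q := hcard
    have hsum : Fintype.card (ZMod q × ZMod q) ≤ n * q := by
      rw [← Finset.card_univ,
        Finset.card_eq_sum_card_fiberwise (f := C) (t := Finset.univ)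
          (fun x _ => Finset.mem_univ _)]
      calc ∑ i : Fin n, (Finset.univ.filter (fun v => C v = i)).card
          ≤ ∑ _i : Fin n, q := Finset.sum_le_sum (fun i _ => hfib i)
        _ = n * q := by simp [Finset.sum_const, Finset.card_univ, mul_comm]
    rw [Fintype.card_prod, hcard] at hsum
    have hq0 : 0 < q := by omega
    exact Nat.le_of_mul_le_mul_right hsum hq0
  refine le_antisymm (Nat.sInf_le hub) (le_csInf ⟨q, hub⟩ hlb)
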